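/- For p, q ∈ [0,1] with 0 < q < 1, the binary entropy of the binary convolution satisfies H₂(p*q) ≥ max(H₂(p), H₂(q)), and H₂(p*q) = H₂(p) + H₂(q) implies p ∈ {0,1} or H₂(q) = 0; in particular if 0 < H₂(q) then H₂(p*q) = H₂(p) + H₂(q) forces H₂(p) = 0. -/

import Mathlib

open Real Set

/-- The binary entropy function `H₂(t) = −t log₂ t − (1−t) log₂ (1−t)`. -/
noncomputable def H2 (t : ℝ) : ℝ := -(t * Real.logb 2 t) - (1 - t) * Real.logb 2 (1 - t)

/-- The binary convolution `p * q = p(1−q) + (1−p)q`. -/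
def bconv (p q : ℝ) : ℝ := p * (1 - q) + (1 - p) * q

lemma H2_eq (t : ℝ) : H2 t = Real.binEntropy t / Real.log 2 := by
  simp only [H2, Real.binEntropy, Real.logb, Real.log_inv]
  ring

lemma bconv_one_sub_left (p q : ℝ) : bconv (1 - p) q = 1 - bconv p q := by
  simp only [bconv]; ring

lemma bconv_one_sub_right (p q : ℝ) : bconv p (1 - q) = 1 - bconv p q := by
  simp only [bconv]; ring

lemma be_bconv_ge_right (p q : ℝ) (hp : p ∈ Icc (0:ℝ) 1) (hq : q ∈ Icc (0:ℝ) 1) :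
    Real.binEntropy q ≤ Real.binEntropy (bconv p q) := by
  have hc := Real.strictConcave_binEntropy.concaveOn
  have h := hc.2 (show q ∈ Icc (0:ℝ) 1 from ⟨hq.1, hq.2⟩)
      (show 1 - q ∈ Icc (0:ℝ) 1 from ⟨by linarith [hq.2], by linarith [hq.1]⟩)
      (show (0:ℝ) ≤ 1 - p by linarith [hp.2]) (show (0:ℝ) ≤ p from hp.1) (by ring)
  have e1 : (1 - p) • q + p • (1 - q) = bconv p q := by simp only [bconv, smul_eq_mul]; ring
  have e2 : (1 - p) • Real.binEntropy q + p • Real.binEntropy (1 - q) = Real.binEntropy q := by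
    rw [Real.binEntropy_one_sub]; simp only [smul_eq_mul]; ring
  rw [e1, e2] at h; exact h

lemma be_bconv_ge_left (p q : ℝ) (hp : p ∈ Icc (0:ℝ) 1) (hq : q ∈ Icc (0:ℝ) 1) :
    Real.binEntropy p ≤ Real.binEntropy (bconv p q) := by
  have hc := Real.strictConcave_binEntropy.concaveOn
  have h := hc.2 (show p ∈ Icc (0:ℝ) 1 from ⟨hp.1, hp.2⟩)
      (show 1 - p ∈ Icc (0:ℝ) 1 from ⟨by linarith [hp.2], by linarith [hp.1]⟩)
      (show (0:ℝ) ≤ 1 - q by linarith [hq.2]) (show (0:ℝ) ≤ q from hq.1) (by ring)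
  have e1 : (1 - q) • p + q • (1 - p) = bconv p q := by simp only [bconv, smul_eq_mul]; ring
  have e2 : (1 - q) • Real.binEntropy p + q • Real.binEntropy (1 - p) = Real.binEntropy p := by
    rw [Real.binEntropy_one_sub]; simp only [smul_eq_mul]; ring
  rw [e1, e2] at h; exact h

lemma g_strictMono (q : ℝ) (hq0 : 0 < q) (hq2 : q ≤ 1/2) :
    StrictMonoOn (fun p => Real.binEntropy p + Real.binEntropy q - Real.binEntropy (bconv p q))
      (Icc (0:ℝ) (1/2)) := by
  apply strictMonoOn_of_deriv_pos (convex_Icc _ _)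
  · apply Continuous.continuousOn
    have : Continuous fun p : ℝ => bconv p q := by
      simp only [bconv]; continuity
    exact (Real.binEntropy_continuous.add continuous_const).sub
      (Real.binEntropy_continuous.comp this)
  · intro x hx
    rw [interior_Icc] at hx
    obtain ⟨hx0, hx2⟩ := hx
    set r := bconv x q with hr
    have hrval : r = x * (1 - q) + (1 - x) * q := rfl
    have hxr : x < r := by
      have : r - x = q * (1 - 2*x) := by rw [hrval]; ring
      nlinarith
    have hr2 : r ≤ 1/2 := by nlinarith [hrval]
    have hr0 : 0 < r := lt_trans hx0 hxr
    have hr1 : r < 1 := by linarith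
    -- derivative computation
    have hlin : HasDerivAt (fun y : ℝ => y * (1 - q) + (1 - y) * q)
        (1 * (1 - q) + (0 - 1) * q) x :=
      ((hasDerivAt_id x).mul_const (1 - q)).add
        (((hasDerivAt_const x (1:ℝ)).sub (hasDerivAt_id x)).mul_const q)
    have hcomp : HasDerivAt (fun y : ℝ => Real.binEntropy (bconv y q))
        ((Real.log (1 - r) - Real.log r) * (1 * (1 - q) + (0 - 1) * q)) x :=
      by have h := (Real.hasDerivAt_binEntropy (ne_of_gt hr0) (ne_of_lt hr1)).comp x hlin; exact h
    have hD : HasDerivAt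
        (fun p => Real.binEntropy p + Real.binEntropy q - Real.binEntropy (bconv p q))
        ((Real.log (1 - x) - Real.log x)
          - (Real.log (1 - r) - Real.log r) * (1 * (1 - q) + (0 - 1) * q)) x := by
      exact ((Real.hasDerivAt_binEntropy (ne_of_gt hx0) (by linarith)).add_const
        (Real.binEntropy q)).sub hcomp
    rw [hD.deriv]
    have hLp : Real.log r < Real.log (1 - x) := by
      apply Real.log_lt_log hr0; linarith
    have hlog1 : Real.log x < Real.log r := Real.log_lt_log hx0 hxr
    have hlog2 : Real.log (1 - r) < Real.log (1 - x) := by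
      apply Real.log_lt_log (by linarith); linarith
    have hLr : 0 ≤ Real.log (1 - r) - Real.log r :=
      sub_nonneg.2 (Real.log_le_log hr0 (by linarith))
    nlinarith [hLr, hlog1, hlog2]

lemma be_strict_half (p q : ℝ) (hp : p ∈ Ioo (0:ℝ) 1) (hq0 : 0 < q) (hq2 : q ≤ 1/2) :
    Real.binEntropy (bconv p q) < Real.binEntropy p + Real.binEntropy q := by
  obtain ⟨hp0, hp1⟩ := hp
  rcases le_or_gt p (1/2) with hp2 | hp2
  · have hm := g_strictMono q hq0 hq2
    have h0 : (0:ℝ) ∈ Icc (0:ℝ) (1/2) := by constructor <;> norm_num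
    have hp' : p ∈ Icc (0:ℝ) (1/2) := ⟨hp0.le, hp2⟩
    have key := hm h0 hp' hp0
    have hb0 : bconv 0 q = q := by simp [bconv]
    simp only [hb0, Real.binEntropy_zero] at key
    linarith
  · have hm := g_strictMono q hq0 hq2
    have h0 : (0:ℝ) ∈ Icc (0:ℝ) (1/2) := by constructor <;> norm_num
    have hp' : (1 - p) ∈ Icc (0:ℝ) (1/2) := ⟨by linarith, by linarith⟩
    have key := hm h0 hp' (by linarith)
    have hb0 : bconv 0 q = q := by simp [bconv]
    simp only [hb0, Real.binEntropy_zero] at key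
    rw [bconv_one_sub_left, Real.binEntropy_one_sub, Real.binEntropy_one_sub] at key
    linarith

lemma be_strict (p q : ℝ) (hp : p ∈ Ioo (0:ℝ) 1) (hq : q ∈ Ioo (0:ℝ) 1) :
    Real.binEntropy (bconv p q) < Real.binEntropy p + Real.binEntropy q := by
  rcases le_or_gt q (1/2) with h | h
  · exact be_strict_half p q hp hq.1 h
  · have key := be_strict_half p (1 - q) hp (by linarith [hq.2]) (by linarith)
    rw [bconv_one_sub_right, Real.binEntropy_one_sub, Real.binEntropy_one_sub] at key
    exact key

/-- For `p ∈ [0,1]` and `0 < q < 1`: `H₂(p*q) ≥ max(H₂(p), H₂(q))`; equality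
`H₂(p*q) = H₂(p) + H₂(q)` implies `p ∈ {0,1}` or `H₂(q) = 0`; and in particular, if
`0 < H₂(q)` then `H₂(p*q) = H₂(p) + H₂(q)` forces `H₂(p) = 0`. -/
theorem stmt_12 (p q : ℝ) (hp : p ∈ Set.Icc (0 : ℝ) 1) (hq : q ∈ Set.Ioo (0 : ℝ) 1) :
    H2 (bconv p q) ≥ max (H2 p) (H2 q) ∧
    (H2 (bconv p q) = H2 p + H2 q → p = 0 ∨ p = 1 ∨ H2 q = 0) ∧
    (0 < H2 q → H2 (bconv p q) = H2 p + H2 q → H2 p = 0) := by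
  have hl2 : 0 < Real.log 2 := Real.log_pos one_lt_two
  have hqI : q ∈ Icc (0:ℝ) 1 := ⟨hq.1.le, hq.2.le⟩
  have main : ∀ x, x = 0 ∨ x = 1 ∨ x ∈ Ioo (0:ℝ) 1 → H2 (bconv x q) = H2 x + H2 q →
      x = 0 ∨ x = 1 ∨ H2 q = 0 := by
    intro x hx heq
    rcases hx with h | h | h
    · exact Or.inl h
    · exact Or.inr (Or.inl h)
    · exfalso
      have hstrict := be_strict x q h hq
      rw [H2_eq, H2_eq, H2_eq, ← add_div, div_eq_div_iff (ne_of_gt hl2) (ne_of_gt hl2)]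
        at heq
      have : Real.binEntropy (bconv x q) = Real.binEntropy x + Real.binEntropy q := by
        have := mul_right_cancel₀ (ne_of_gt hl2) heq
        exact this
      linarith
  have hcases : p = 0 ∨ p = 1 ∨ p ∈ Ioo (0:ℝ) 1 := by
    rcases eq_or_lt_of_le hp.1 with h0 | h0
    · exact Or.inl h0.symm
    rcases eq_or_lt_of_le hp.2 with h1 | h1
    · exact Or.inr (Or.inl h1)
    · exact Or.inr (Or.inr ⟨h0, h1⟩)
  refine ⟨?_, fun heq => main p hcases heq, ?_⟩
  · rw [ge_iff_le, max_le_iff]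
    constructor
    · rw [H2_eq, H2_eq]
      exact div_le_div_of_nonneg_right (be_bconv_ge_left p q hp hqI) hl2.le
    · rw [H2_eq, H2_eq]
      exact div_le_div_of_nonneg_right (be_bconv_ge_right p q hp hqI) hl2.le
  · intro hq2 heq
    rcases main p hcases heq with h | h | h
    · subst h; simp [H2]
    · subst h; simp [H2]
    · linarith
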